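/- For every indecomposable countable ordinal β, the principle WCG_β holds if and only if the principle WCG^{ℵ₀}_β holds. -/

import Mathlib

open Ordinal Set

/-- The first uncountable ordinal, `ω₁`. -/
noncomputable def omega1 : Ordinal := (Cardinal.aleph 1).ord

/-- The order type of a set of ordinals: the unique ordinal `o` (when it
exists) such that `A` is order-isomorphic to `Set.Iio o`. -/
noncomputable def otype (A : Set Ordinal) : Ordinal :=
  sInf {o : Ordinal | Nonempty (Set.Iio o ≃o A)}

/-- `A` is closed in `δ`: the supremum of every nonempty subset of `A`,
whenever it is less than `δ`, belongs to `A`. -/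
def IsClosedIn (A : Set Ordinal) (δ : Ordinal) : Prop :=
  ∀ s ⊆ A, s.Nonempty → sSup s < δ → sSup s ∈ A

/-- `A` is club in `δ`: a subset of `δ`, unbounded in `δ` and closed in `δ`. -/
def IsClubIn (A : Set Ordinal) (δ : Ordinal) : Prop :=
  A ⊆ Set.Iio δ ∧ sSup A = δ ∧ IsClosedIn A δ

/-- `β` is (additively) indecomposable: `β > 0` and `γ + β = β` for all `γ < β`. -/
def Indecomposable (β : Ordinal) : Prop := 0 < β ∧ ∀ γ < β, γ + β = β

/-- A `β`-ladder system: for every nonzero `δ < ω₁` divisible by `β`,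
`A δ` is club in `δ` with order type `β`. -/
def IsLadderSystem (β : Ordinal) (A : Ordinal → Set Ordinal) : Prop :=
  ∀ δ, δ < omega1 → δ ≠ 0 → β ∣ δ → IsClubIn (A δ) δ ∧ otype (A δ) = β

/-- The `β`-Weak Club Guessing principle `WCG_β`. -/
def WCG (β : Ordinal) : Prop :=
  ∃ A : Ordinal → Set Ordinal, IsLadderSystem β A ∧
    ∀ D : Set Ordinal, IsClubIn D omega1 →
      ∃ δ ∈ D, δ ≠ 0 ∧ β ∣ δ ∧ otype (A δ ∩ D) = β

/-- A `(β, ℵ₀)`-system: for every `n < ω` and every nonzero `δ < ω₁`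
divisible by `β`, `A n δ` is club in `δ` with order type `β`. -/
def IsSystem (β : Ordinal) (A : ℕ → Ordinal → Set Ordinal) : Prop :=
  ∀ (n : ℕ) (δ : Ordinal), δ < omega1 → δ ≠ 0 → β ∣ δ →
    IsClubIn (A n δ) δ ∧ otype (A n δ) = β

/-- The principle `WCG^{ℵ₀}_β`. -/
def WCGomega (β : Ordinal) : Prop :=
  ∃ A : ℕ → Ordinal → Set Ordinal, IsSystem β A ∧
    ∀ D : Set Ordinal, IsClubIn D omega1 →
      ∃ δ ∈ D, δ ≠ 0 ∧ β ∣ δ ∧ ∃ n : ℕ, otype (A n δ ∩ D) = β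


-- ===== toolkit =====
open Ordinal Set Cardinal
universe u

noncomputable def nadd (a b : Ordinal.{u}) : Ordinal.{u} :=
  max (⨆ x : Iio a, Order.succ (nadd x.1 b)) (⨆ x : Iio b, Order.succ (nadd a x.1))
termination_by (a, b)
decreasing_by all_goals cases x; decreasing_tactic

infixl:65 " ♯ " => nadd

theorem nadd_le_iff {a b c : Ordinal.{u}} :
    b ♯ c ≤ a ↔ (∀ b' < b, b' ♯ c < a) ∧ ∀ c' < c, b ♯ c' < a := by
  rw [nadd, max_le_iff, Ordinal.iSup_le_iff, Ordinal.iSup_le_iff]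
  simp only [Order.succ_le_iff, Subtype.forall, mem_Iio]

theorem nadd_lt_nadd_right {b c : Ordinal.{u}} (h : b < c) (a : Ordinal.{u}) : b ♯ a < c ♯ a := by
  have h1 : Order.succ (b ♯ a) ≤ c ♯ a := by
    conv_rhs => rw [nadd]
    exact le_max_of_le_left (Ordinal.le_iSup (fun x : Iio c => Order.succ (x.1 ♯ a)) ⟨b, h⟩)
  exact Order.succ_le_iff.1 h1

theorem nadd_lt_nadd_left {b c : Ordinal.{u}} (h : b < c) (a : Ordinal.{u}) : a ♯ b < a ♯ c := by
  have h1 : Order.succ (a ♯ b) ≤ a ♯ c := by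
    conv_rhs => rw [nadd]
    exact le_max_of_le_right (Ordinal.le_iSup (fun x : Iio c => Order.succ (a ♯ x.1)) ⟨b, h⟩)
  exact Order.succ_le_iff.1 h1

theorem nadd_le_nadd_left {b c : Ordinal.{u}} (h : b ≤ c) (a : Ordinal.{u}) : a ♯ b ≤ a ♯ c := by
  rcases h.lt_or_eq with h | rfl
  · exact (nadd_lt_nadd_left h a).le
  · exact le_rfl

theorem nadd_le_nadd_right {b c : Ordinal.{u}} (h : b ≤ c) (a : Ordinal.{u}) : b ♯ a ≤ c ♯ a := by
  rcases h.lt_or_eq with h | rfl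
  · exact (nadd_lt_nadd_right h a).le
  · exact le_rfl

theorem nadd_lt_nadd_of_lt_of_le {a b c d : Ordinal.{u}} (h1 : a < b) (h2 : c ≤ d) :
    a ♯ c < b ♯ d :=
  (nadd_lt_nadd_right h1 c).trans_le (nadd_le_nadd_left h2 b)

theorem nadd_lt_nadd_of_le_of_lt {a b c d : Ordinal.{u}} (h1 : a ≤ b) (h2 : c < d) :
    a ♯ c < b ♯ d :=
  (nadd_le_nadd_right h1 c).trans_lt (nadd_lt_nadd_left h2 b)

theorem nadd_zero (a : Ordinal.{u}) : a ♯ 0 = a := by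
  induction a using Ordinal.induction with
  | _ a IH =>
    apply le_antisymm
    · rw [nadd_le_iff]
      exact ⟨fun a' ha' => by rw [IH a' ha']; exact ha', fun c' hc' => absurd hc' not_lt_zero⟩
    · refine le_of_forall_lt fun c hc => ?_
      rw [← IH c hc]
      exact nadd_lt_nadd_right hc 0

theorem nadd_one (a : Ordinal.{u}) : a ♯ 1 = Order.succ a := by
  induction a using Ordinal.induction with
  | _ a IH =>
    apply le_antisymm
    · rw [nadd_le_iff]
      refine ⟨fun a' ha' => by rw [IH a' ha']; exact Order.succ_lt_succ ha', fun c' hc' => ?_⟩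
      rw [Ordinal.lt_one_iff_zero.1 hc', nadd_zero]
      exact Order.lt_succ a
    · apply Order.succ_le_of_lt
      calc a = a ♯ 0 := (nadd_zero a).symm
        _ < a ♯ 1 := nadd_lt_nadd_left zero_lt_one a

theorem nadd_comm_le (a b : Ordinal.{u}) : a ♯ b ≤ b ♯ a := by
  induction a using Ordinal.induction generalizing b with
  | _ a IHa =>
    induction b using Ordinal.induction with
    | _ b IHb =>
      rw [nadd_le_iff]
      exact ⟨fun a' ha' => (IHa a' ha' b).trans_lt (nadd_lt_nadd_left ha' b),
        fun b' hb' => (IHb b' hb').trans_lt (nadd_lt_nadd_right hb' a)⟩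

theorem nadd_comm (a b : Ordinal.{u}) : a ♯ b = b ♯ a :=
  le_antisymm (nadd_comm_le a b) (nadd_comm_le b a)





/-- enumeration-style order type predicate -/
def OT (A : Set Ordinal.{u}) (o : Ordinal.{u}) : Prop :=
  ∃ f : Ordinal → Ordinal, StrictMonoOn f (Iio o) ∧ f '' (Iio o) = A

theorem OT_iff {A : Set Ordinal.{u}} {o : Ordinal.{u}} :
    OT A o ↔ Nonempty (Set.Iio o ≃o A) := by
  constructor
  · rintro ⟨f, hf, hfA⟩
    exact ⟨(hf.orderIso f _).trans (OrderIso.setCongr _ _ hfA)⟩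
  · rintro ⟨e⟩
    refine ⟨fun x => if h : x < o then (e ⟨x, h⟩ : Ordinal) else 0, ?_, ?_⟩
    · intro x hx y hy hxy
      have hx' : x < o := hx
      have hy' : y < o := hy
      dsimp only
      rw [dif_pos hx', dif_pos hy']
      exact_mod_cast e.strictMono (show (⟨x,hx'⟩ : Iio o) < ⟨y,hy'⟩ from hxy)
    · ext a; constructor
      · rintro ⟨x, hx, rfl⟩
        have hx' : x < o := hx
        dsimp only
        rw [dif_pos hx']; exact (e ⟨x, hx'⟩).2
      · intro ha
        refine ⟨e.symm ⟨a, ha⟩, (e.symm ⟨a, ha⟩).2, ?_⟩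
        have h2 : (e.symm ⟨a, ha⟩ : Ordinal) < o := (e.symm ⟨a, ha⟩).2
        dsimp only
        rw [dif_pos h2]
        exact congrArg Subtype.val (e.apply_symm_apply ⟨a, ha⟩)
theorem otype_eq_of_OT {A : Set Ordinal.{u}} {o : Ordinal.{u}} (h : OT A o)
    (huniq : ∀ o', OT A o' → o' = o) : otype A = o := by
  have : {o' : Ordinal | Nonempty (Set.Iio o' ≃o A)} = {o} := by
    ext o'
    simp only [mem_setOf_eq, mem_singleton_iff, ← OT_iff]
    exact ⟨huniq o', fun h' => h' ▸ h⟩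
  rw [otype, this, csInf_singleton]

/-- key well-order fact -/
theorem le_of_strictMonoOn {a b : Ordinal.{u}} {g : Ordinal → Ordinal}
    (hg : StrictMonoOn g (Iio a)) (hgb : ∀ x < a, g x < b) : a ≤ b := by
  by_contra hba
  push_neg at hba
  have key : ∀ x < a, x ≤ g x := by
    intro x
    induction x using Ordinal.induction with
    | _ x IH =>
      intro hx
      by_contra hgx
      push_neg at hgx
      have h1 : g x < a := hgx.trans hx
      have h2 := IH (g x) hgx h1
      exact absurd (hg h1 hx hgx) (not_lt.2 h2)
  exact absurd ((key b hba).trans_lt (hgb b hba)) (lt_irrefl _)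

theorem OT.mono {A B : Set Ordinal.{u}} {a b : Ordinal.{u}} (hA : OT A a) (hB : OT B b)
    (hAB : A ⊆ B) : a ≤ b := by
  obtain ⟨f, hf, hfA⟩ := hA
  obtain ⟨e⟩ : Nonempty (Set.Iio b ≃o B) := OT_iff.1 hB
  have hm : ∀ x, x < a → f x ∈ B := fun x h => hAB (hfA ▸ ⟨x, h, rfl⟩)
  refine le_of_strictMonoOn (g := fun x => if h : x < a then (e.symm ⟨f x, hm x h⟩ : Ordinal) else 0) ?_ ?_
  · intro x hx y hy hxy
    have hx' : x < a := hx
    have hy' : y < a := hy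
    dsimp only
    rw [dif_pos hx', dif_pos hy']
    have : f x < f y := hf hx hy hxy
    exact_mod_cast e.symm.strictMono
      (show (⟨f x, hm x hx'⟩ : ↥B) < ⟨f y, hm y hy'⟩ from this)
  · intro x hx
    rw [dif_pos hx]
    exact (e.symm ⟨f x, hm x hx⟩).2

theorem OT.unique {A : Set Ordinal.{u}} {a b : Ordinal.{u}} (hA : OT A a) (hB : OT A b) : a = b :=
  le_antisymm (hA.mono hB subset_rfl) (hB.mono hA subset_rfl)

theorem OT.otype_eq {A : Set Ordinal.{u}} {o : Ordinal.{u}} (h : OT A o) : otype A = o :=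
  otype_eq_of_OT h (fun _ h' => h'.unique h)



/-- every `s < o` is realized as the otype of a proper initial segment cut at a point of `A` -/
theorem OT.seg {A : Set Ordinal.{u}} {o : Ordinal.{u}} (h : OT A o) {s : Ordinal}
    (hs : s < o) : ∃ x ∈ A, OT (A ∩ Iio x) s := by
  obtain ⟨f, hf, hfA⟩ := h
  refine ⟨f s, hfA ▸ ⟨s, hs, rfl⟩, f, hf.mono (fun y (hy : y < s) => hy.trans hs), ?_⟩
  ext a
  constructor
  · rintro ⟨y, hy, rfl⟩
    have hy' : y < s := hy
    exact ⟨hfA ▸ ⟨y, hy'.trans hs, rfl⟩, hf (hy'.trans hs) hs hy'⟩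
  · rintro ⟨haA, hax⟩
    rw [← hfA] at haA
    obtain ⟨y, hy, rfl⟩ := haA
    have : y < s := by
      by_contra hys
      push_neg at hys
      exact absurd (hf.monotoneOn hs hy hys) (not_le.2 hax)
    exact ⟨y, this, rfl⟩

/-- cutting at a point of `A` gives otype < o -/
theorem OT.init {A : Set Ordinal.{u}} {o : Ordinal.{u}} (h : OT A o) {x : Ordinal}
    (hx : x ∈ A) : ∃ s < o, OT (A ∩ Iio x) s := by
  obtain ⟨f, hf, hfA⟩ := h
  have hx' := hx
  rw [← hfA] at hx'
  obtain ⟨s, hs, rfl⟩ := hx'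
  have hs' : s < o := hs
  refine ⟨s, hs', f, hf.mono (fun y (hy : y < s) => hy.trans hs'), ?_⟩
  ext a
  constructor
  · rintro ⟨y, hy, rfl⟩
    have hy' : y < s := hy
    exact ⟨hfA ▸ ⟨y, hy'.trans hs', rfl⟩, hf (hy'.trans hs') hs' hy'⟩
  · rintro ⟨haA, hax⟩
    rw [← hfA] at haA
    obtain ⟨y, hy, rfl⟩ := haA
    have : y < s := by
      by_contra hys
      push_neg at hys
      exact absurd (hf.monotoneOn hs' hy hys) (not_le.2 hax)
    exact ⟨y, this, rfl⟩

theorem OT_empty : OT ∅ (0 : Ordinal.{u}) :=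
  ⟨id, by simp [StrictMonoOn], by simp [Iio, not_lt_zero]⟩

theorem OT_singleton (a : Ordinal.{u}) : OT {a} 1 := by
  refine ⟨fun _ => a, ?_, ?_⟩
  · intro x hx y hy hxy
    have hx0 : x = 0 := Ordinal.lt_one_iff_zero.1 hx
    have hy0 : y = 0 := Ordinal.lt_one_iff_zero.1 hy
    exact absurd hxy (by rw [hx0, hy0]; exact lt_irrefl 0)
  · ext b
    simp only [mem_image, mem_Iio, mem_singleton_iff]
    constructor
    · rintro ⟨x, _, rfl⟩; rfl
    · rintro rfl; exact ⟨0, zero_lt_one, rfl⟩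

theorem OT.append {A : Set Ordinal.{u}} {γ c d : Ordinal.{u}}
    (h1 : OT (A ∩ Iio γ) c) (h2 : OT (A ∩ Ici γ) d) : OT A (c + d) := by
  obtain ⟨f, hf, hfA⟩ := h1
  obtain ⟨g, hg, hgA⟩ := h2
  classical
  refine ⟨fun x => if x < c then f x else g (x - c), ?_, ?_⟩
  · intro x hx y hy hxy
    have hy' : y < c + d := hy
    have hx' : x < c + d := hx
    dsimp only
    rcases lt_or_ge x c with hxc | hxc
    · rcases lt_or_ge y c with hyc | hyc
      · rw [if_pos hxc, if_pos hyc]; exact hf hxc hyc hxy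
      · rw [if_pos hxc, if_neg (not_lt.2 hyc)]
        have m1 : f x ∈ A ∩ Iio γ := hfA ▸ ⟨x, hxc, rfl⟩
        have hyd : y - c < d := by
          have := Ordinal.add_sub_cancel_of_le hyc
          exact (add_lt_add_iff_left c).1 (by rw [this]; exact hy')
        have m2 : g (y - c) ∈ A ∩ Ici γ := hgA ▸ ⟨y - c, hyd, rfl⟩
        exact lt_of_lt_of_le m1.2 m2.2
    · have hyc : c ≤ y := hxc.trans hxy.le
      rw [if_neg (not_lt.2 hxc), if_neg (not_lt.2 hyc)]
      have hxd : x - c < d := by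
        have := Ordinal.add_sub_cancel_of_le hxc
        exact (add_lt_add_iff_left c).1 (by rw [this]; exact hx')
      have hyd : y - c < d := by
        have := Ordinal.add_sub_cancel_of_le hyc
        exact (add_lt_add_iff_left c).1 (by rw [this]; exact hy')
      refine hg hxd hyd ?_
      have : c + (x - c) < c + (y - c) := by
        rw [Ordinal.add_sub_cancel_of_le hxc, Ordinal.add_sub_cancel_of_le hyc]
        exact hxy
      exact (add_lt_add_iff_left c).1 this
  · ext a
    constructor
    · rintro ⟨x, hx, rfl⟩
      have hx' : x < c + d := hx
      dsimp only
      rcases lt_or_ge x c with hxc | hxc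
      · rw [if_pos hxc]; exact (hfA ▸ ⟨x, hxc, rfl⟩ : f x ∈ A ∩ Iio γ).1
      · rw [if_neg (not_lt.2 hxc)]
        have hxd : x - c < d := by
          have := Ordinal.add_sub_cancel_of_le hxc
          exact (add_lt_add_iff_left c).1 (by rw [this]; exact hx')
        exact (hgA ▸ ⟨x - c, hxd, rfl⟩ : g (x - c) ∈ A ∩ Ici γ).1
    · intro ha
      rcases lt_or_ge a γ with haγ | haγ
      · have : a ∈ A ∩ Iio γ := ⟨ha, haγ⟩
        rw [← hfA] at this
        obtain ⟨x, hx, rfl⟩ := this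
        have hx' : x < c := hx
        refine ⟨x, hx'.trans_le (le_add_right le_rfl), ?_⟩
        dsimp only; rw [if_pos hx']
      · have : a ∈ A ∩ Ici γ := ⟨ha, haγ⟩
        rw [← hgA] at this
        obtain ⟨x, hx, rfl⟩ := this
        have hx' : x < d := hx
        refine ⟨c + x, (add_lt_add_iff_left c).2 hx', ?_⟩
        dsimp only
        rw [if_neg (not_lt.2 (le_add_right le_rfl)), Ordinal.add_sub_cancel]



theorem OT_exists {A : Set Ordinal.{u}} {δ : Ordinal.{u}} (hA : A ⊆ Iio δ) :
    ∃ o : Ordinal.{u}, OT A o := by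
  classical
  let e := ToType.mk (o := δ)
  let S : Set δ.ToType := {t | (e.symm t : Ordinal) ∈ A}
  let r : ↥S → ↥S → Prop := (· < ·)
  have : IsWellOrder ↥S r := inferInstance
  refine ⟨type r, fun x => if h : x < type r then (e.symm ↑(enum r ⟨x, h⟩) : Ordinal) else 0,
    ?_, ?_⟩
  · intro x hx y hy hxy
    have hx' : x < type r := hx
    have hy' : y < type r := hy
    dsimp only
    rw [dif_pos hx', dif_pos hy']
    have h1 : r (enum r ⟨x, hx'⟩) (enum r ⟨y, hy'⟩) :=
      (enum_lt_enum (r := r) (o₁ := ⟨x, hx'⟩) (o₂ := ⟨y, hy'⟩)).2 hxy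
    have h2 : (↑(enum r ⟨x, hx'⟩) : δ.ToType) < ↑(enum r ⟨y, hy'⟩) := h1
    exact_mod_cast e.symm.strictMono h2
  · ext a
    constructor
    · rintro ⟨x, hx, rfl⟩
      have hx' : x < type r := hx
      dsimp only
      rw [dif_pos hx']
      exact (enum r ⟨x, hx'⟩).2
    · intro ha
      have haδ : a < δ := hA ha
      have htS : e ⟨a, haδ⟩ ∈ S := by
        simp only [S, mem_setOf_eq, OrderIso.symm_apply_apply, e]
        exact ha
      refine ⟨typein r ⟨e ⟨a, haδ⟩, htS⟩, typein_lt_type r _, ?_⟩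
      have h3 : typein r ⟨e ⟨a, haδ⟩, htS⟩ < type r := typein_lt_type r _
      dsimp only
      rw [dif_pos h3, enum_typein]
      simp [e]

/-- For `W = ω ^ ρ` with nadd-closure below `W`, the CNF-style `≤`-half identity. -/
theorem nadd_cnf_le {ρ : Ordinal.{u}}
    (Cρ : ∀ r s : Ordinal.{u}, r < ω ^ ρ → s < ω ^ ρ → r ♯ s < ω ^ ρ) :
    ∀ γ : Ordinal.{u}, ∀ (j p : ℕ) (r s : Ordinal.{u}), r < ω ^ ρ → s < ω ^ ρ →
      (ω ^ ρ * j + r) ♯ (ω ^ ρ * p + s) = γ →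
      γ ≤ ω ^ ρ * (j + p : ℕ) + (r ♯ s) := by
  set W := ω ^ ρ with hW
  have hW0 : W ≠ 0 := opow_ne_zero ρ omega0_ne_zero
  intro γ
  induction γ using Ordinal.induction with
  | _ γ IH =>
    rintro j p r s hr hs rfl
    rw [nadd_le_iff]
    constructor
    · -- ∀ a' < W*j + r
      intro a' ha'
      rcases le_or_gt (W * j) a' with hle | hlt
      · -- a' = W*j + r', r' < r
        have hr' : W * j + (a' - W * j) = a' := Ordinal.add_sub_cancel_of_le hle
        have hrr : a' - W * j < r := by
          have : W * j + (a' - W * j) < W * j + r := by rw [hr']; exact ha'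
          exact (add_lt_add_iff_left _).1 this
        have hlt2 : a' ♯ (W * p + s) < (W * j + r) ♯ (W * p + s) :=
          nadd_lt_nadd_right ha' _
        have := IH _ hlt2 j p (a' - W * j) s (hrr.trans hr) hs (by rw [hr'])
        calc a' ♯ (W * p + s) ≤ W * (j + p : ℕ) + ((a' - W * j) ♯ s) := this
          _ < W * (j + p : ℕ) + (r ♯ s) := add_lt_add_right (nadd_lt_nadd_right hrr s) _
      · -- a' < W*j : divide
        have hdiv : W * (a' / W) + a' % W = a' := Ordinal.div_add_mod a' W
        have hqlt : a' / W < (j : Ordinal) := (Ordinal.div_lt hW0).2 hlt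
        have hqω : a' / W < ω := hqlt.trans (nat_lt_omega0 j)
        obtain ⟨j', hj'⟩ := Ordinal.lt_omega0.1 hqω
        have hj'j : j' < j := by exact_mod_cast hj' ▸ hqlt
        have hmod : a' % W < W := Ordinal.mod_lt a' hW0
        have hlt2 : a' ♯ (W * p + s) < (W * j + r) ♯ (W * p + s) :=
          nadd_lt_nadd_right (hlt.trans_le (le_add_right le_rfl)) _
        have h1 := IH _ hlt2 j' p (a' % W) s (hmod.trans_le le_rfl) hs
          (by rw [← hj', hdiv])
        calc a' ♯ (W * p + s) ≤ W * (j' + p : ℕ) + (a' % W ♯ s) := h1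
          _ < W * (j' + p : ℕ) + W := add_lt_add_right (Cρ _ _ hmod hs) _
          _ = W * ((j' + p : ℕ) + 1 : Ordinal) := by rw [mul_add, mul_one]
          _ ≤ W * (j + p : ℕ) := by
              apply mul_le_mul_right
              have : ((j' + p : ℕ) : Ordinal) + 1 = ((j' + p + 1 : ℕ) : Ordinal) := by
                push_cast; ring
              rw [this]
              exact Nat.cast_le.2 (by omega)
          _ ≤ W * (j + p : ℕ) + (r ♯ s) := le_add_right le_rfl
    · -- ∀ b' < W*p + s : symmetric
      intro b' hb'
      rcases le_or_gt (W * p) b' with hle | hlt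
      · have hr' : W * p + (b' - W * p) = b' := Ordinal.add_sub_cancel_of_le hle
        have hrr : b' - W * p < s := by
          have : W * p + (b' - W * p) < W * p + s := by rw [hr']; exact hb'
          exact (add_lt_add_iff_left _).1 this
        have hlt2 : (W * j + r) ♯ b' < (W * j + r) ♯ (W * p + s) :=
          nadd_lt_nadd_left hb' _
        have := IH _ hlt2 j p r (b' - W * p) hr (hrr.trans hs) (by rw [hr'])
        calc (W * j + r) ♯ b' ≤ W * (j + p : ℕ) + (r ♯ (b' - W * p)) := this
          _ < W * (j + p : ℕ) + (r ♯ s) := add_lt_add_right (nadd_lt_nadd_left hrr r) _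
      · have hdiv : W * (b' / W) + b' % W = b' := Ordinal.div_add_mod b' W
        have hqlt : b' / W < (p : Ordinal) := (Ordinal.div_lt hW0).2 hlt
        have hqω : b' / W < ω := hqlt.trans (nat_lt_omega0 p)
        obtain ⟨p', hp'⟩ := Ordinal.lt_omega0.1 hqω
        have hp'p : p' < p := by exact_mod_cast hp' ▸ hqlt
        have hmod : b' % W < W := Ordinal.mod_lt b' hW0
        have hlt2 : (W * j + r) ♯ b' < (W * j + r) ♯ (W * p + s) :=
          nadd_lt_nadd_left (hlt.trans_le (le_add_right le_rfl)) _
        have h1 := IH _ hlt2 j p' r (b' % W) hr hmod (by rw [← hp', hdiv])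
        calc (W * j + r) ♯ b' ≤ W * (j + p' : ℕ) + (r ♯ (b' % W)) := h1
          _ < W * (j + p' : ℕ) + W := add_lt_add_right (Cρ _ _ hr hmod) _
          _ = W * ((j + p' : ℕ) + 1 : Ordinal) := by rw [mul_add, mul_one]
          _ ≤ W * (j + p : ℕ) := by
              apply mul_le_mul_right
              have : ((j + p' : ℕ) : Ordinal) + 1 = ((j + p' + 1 : ℕ) : Ordinal) := by
                push_cast; ring
              rw [this]
              exact Nat.cast_le.2 (by omega)
          _ ≤ W * (j + p : ℕ) + (r ♯ s) := le_add_right le_rfl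

theorem nadd_lt_opow {τ : Ordinal.{u}} :
    ∀ a b : Ordinal.{u}, a < ω ^ τ → b < ω ^ τ → a ♯ b < ω ^ τ := by
  induction τ using Ordinal.induction with
  | _ τ IHτ =>
    rcases Ordinal.zero_or_succ_or_isSuccLimit τ with rfl | ⟨ρ, rfl⟩ | hlim
    · intro a b ha hb
      rw [opow_zero] at *
      have ha0 : a = 0 := Ordinal.lt_one_iff_zero.1 ha
      have hb0 : b = 0 := Ordinal.lt_one_iff_zero.1 hb
      rw [ha0, hb0, nadd_zero]
      exact zero_lt_one
    · intro a b ha hb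
      have hρ : ρ < Order.succ ρ := Order.lt_succ ρ
      have Cρ := IHτ ρ hρ
      set W := ω ^ ρ with hW
      have hW0 : W ≠ 0 := opow_ne_zero ρ omega0_ne_zero
      rw [opow_succ] at ha hb ⊢
      -- a < W * ω
      have hja : a / W < ω := (Ordinal.div_lt hW0).2 ha
      have hjb : b / W < ω := (Ordinal.div_lt hW0).2 hb
      obtain ⟨j, hj⟩ := Ordinal.lt_omega0.1 hja
      obtain ⟨p, hp⟩ := Ordinal.lt_omega0.1 hjb
      have hda : W * j + a % W = a := by rw [← hj]; exact Ordinal.div_add_mod a W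
      have hdb : W * p + b % W = b := by rw [← hp]; exact Ordinal.div_add_mod b W
      have hra : a % W < W := Ordinal.mod_lt a hW0
      have hrb : b % W < W := Ordinal.mod_lt b hW0
      have key := nadd_cnf_le Cρ (a ♯ b) j p (a % W) (b % W) hra hrb
        (by rw [hda, hdb])
      calc a ♯ b ≤ W * (j + p : ℕ) + (a % W ♯ b % W) := key
        _ < W * (j + p : ℕ) + W := add_lt_add_right (Cρ _ _ hra hrb) _
        _ = W * ((j + p : ℕ) + 1 : Ordinal) := by rw [mul_add, mul_one]
        _ < W * ω := by
            refine (mul_lt_mul_iff_right₀ (pos_iff_ne_zero.2 hW0)).2 ?_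
            have : ((j + p : ℕ) : Ordinal) + 1 = ((j + p + 1 : ℕ) : Ordinal) := by
              push_cast; ring
            rw [this]
            exact nat_lt_omega0 _
    · intro a b ha hb
      obtain ⟨σa, hσa, ha'⟩ := (Ordinal.lt_opow_of_isSuccLimit omega0_ne_zero hlim).1 ha
      obtain ⟨σb, hσb, hb'⟩ := (Ordinal.lt_opow_of_isSuccLimit omega0_ne_zero hlim).1 hb
      set σ := max σa σb
      have hσ : σ < τ := max_lt hσa hσb
      have ha'' : a < ω ^ σ := ha'.trans_le (opow_le_opow_right omega0_pos (le_max_left _ _))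
      have hb'' : b < ω ^ σ := hb'.trans_le (opow_le_opow_right omega0_pos (le_max_right _ _))
      exact (IHτ σ hσ a b ha'' hb'').trans_le
        (opow_le_opow_right omega0_pos hσ.le)

/-- nadd-closure for additively principal ordinals -/
theorem nadd_lt_of_principal {β a b : Ordinal.{u}}
    (hβ : Principal (· + ·) β) (ha : a < β) (hb : b < β) : a ♯ b < β := by
  rcases Ordinal.principal_add_iff_zero_or_omega0_opow.1 hβ with rfl | ⟨τ, rfl⟩
  · exact absurd ha (not_lt_zero (a := a))
  · exact nadd_lt_opow a b ha hb

theorem bddAbove_of_subset_Iio {A : Set Ordinal.{u}} {δ : Ordinal.{u}} (h : A ⊆ Iio δ) :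
    BddAbove A := ⟨δ, fun _ hx => le_of_lt (h hx)⟩

/-- union bound via natural sum -/
theorem OT_union_le {δ : Ordinal.{u}} : ∀ (v : Ordinal.{u}) {A B : Set Ordinal.{u}} {a b c},
    A ⊆ Iio δ → B ⊆ Iio δ → OT A a → OT B b → OT (A ∪ B) c → a ♯ b = v → c ≤ v := by
  intro v
  induction v using Ordinal.induction with
  | _ v IH =>
    rintro A B a b c hAδ hBδ hA hB hC rfl
    by_contra hc
    push_neg at hc
    obtain ⟨x, hxAB, hseg⟩ := hC.seg hc
    have hsplit : (A ∪ B) ∩ Iio x = (A ∩ Iio x) ∪ (B ∩ Iio x) := by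
      ext y; simp [mem_union, mem_inter_iff]; tauto
    rw [hsplit] at hseg
    obtain ⟨a', hA'⟩ := OT_exists (fun y hy => hAδ hy.1 : A ∩ Iio x ⊆ Iio δ)
    obtain ⟨b', hB'⟩ := OT_exists (fun y hy => hBδ hy.1 : B ∩ Iio x ⊆ Iio δ)
    have ha' : a' ≤ a := hA'.mono hA inter_subset_left
    have hb' : b' ≤ b := hB'.mono hB inter_subset_left
    have hlt : a' ♯ b' < a ♯ b := by
      rcases hxAB with hxA | hxB
      · obtain ⟨s, hs, hOTs⟩ := hA.init hxA
        have : a' = s := hA'.unique hOTs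
        exact nadd_lt_nadd_of_lt_of_le (this ▸ hs) hb'
      · obtain ⟨s, hs, hOTs⟩ := hB.init hxB
        have : b' = s := hB'.unique hOTs
        exact nadd_lt_nadd_of_le_of_lt ha' (this ▸ hs)
    have := IH _ hlt (fun y hy => hAδ hy.1) (fun y hy => hBδ hy.1) hA' hB' hseg rfl
    exact absurd (hlt.trans_le this) (lt_irrefl _)

theorem OT_union_lt {β δ : Ordinal.{u}} (hP : Principal (· + ·) β)
    {A B : Set Ordinal.{u}} {a b c : Ordinal.{u}}
    (hAδ : A ⊆ Iio δ) (hBδ : B ⊆ Iio δ) (hA : OT A a) (hB : OT B b)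
    (hC : OT (A ∪ B) c) (ha : a < β) (hb : b < β) : c < β :=
  lt_of_le_of_lt (OT_union_le _ hAδ hBδ hA hB hC rfl) (nadd_lt_of_principal hP ha hb)

/-- finite unions stay below an additively principal β -/
theorem OT_finite_union_lt {β δ : Ordinal.{u}} (hP : Principal (· + ·) β) (hβ0 : 0 < β)
    (C : ℕ → Set Ordinal.{u}) (hCδ : ∀ i, C i ⊆ Iio δ)
    (hC : ∀ i, ∃ c < β, OT (C i) c) :
    ∀ K : ℕ, ∀ c, OT (⋃ i < K, C i) c → c < β := by
  intro K
  induction K with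
  | zero =>
    intro c hc
    have : (⋃ i < 0, C i) = (∅ : Set Ordinal) := by simp
    rw [this] at hc
    have : c = 0 := hc.unique OT_empty
    exact this ▸ hβ0
  | succ K IHK =>
    intro c hc
    have hsplit : (⋃ i < K + 1, C i) = (⋃ i < K, C i) ∪ C K := by
      ext y
      simp only [mem_iUnion, mem_union, exists_prop]
      constructor
      · rintro ⟨i, hi, hy⟩
        rcases Nat.lt_succ_iff_lt_or_eq.1 hi with h | rfl
        · exact Or.inl ⟨i, h, hy⟩
        · exact Or.inr hy
      · rintro (⟨i, hi, hy⟩ | hy)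
        · exact ⟨i, Nat.lt_succ_of_lt hi, hy⟩
        · exact ⟨K, Nat.lt_succ_self K, hy⟩
    rw [hsplit] at hc
    have hUδ : (⋃ i < K, C i) ⊆ Iio δ := by
      intro y hy
      simp only [mem_iUnion, exists_prop] at hy
      obtain ⟨i, _, hy⟩ := hy
      exact hCδ i hy
    obtain ⟨u, hu⟩ := OT_exists hUδ
    obtain ⟨ck, hck, hOTk⟩ := hC K
    exact OT_union_lt hP hUδ (hCδ K) hu hOTk hc (IHK u hu) hck

/-- tail of a type-β subset of a cofinal type-β set still has type β -/
theorem OT.tail {A S : Set Ordinal.{u}} {δ β γ : Ordinal.{u}}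
    (hAδ : A ⊆ Iio δ) (hSA : S ⊆ A) (hsupA : sSup A = δ) (hA : OT A β) (hS : OT S β)
    (hβ0 : 0 < β) (hind : ∀ c < β, c + β = β) (hγ : γ < δ) : OT (S ∩ Ici γ) β := by
  have hAne : A.Nonempty := by
    rcases A.eq_empty_or_nonempty with rfl | h
    · rw [csSup_empty] at hsupA
      exact absurd hγ (by rw [← hsupA]; exact not_lt_zero (a := γ))
    · exact h
  obtain ⟨x, hxA, hγx⟩ := exists_lt_of_lt_csSup hAne (hsupA ▸ hγ)
  obtain ⟨s, hs, hOTs⟩ := hA.init hxA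
  obtain ⟨cc, hcc⟩ := OT_exists (fun y hy => hAδ (hSA hy.1) : S ∩ Iio γ ⊆ Iio δ)
  have hccs : cc ≤ s := hcc.mono hOTs (fun y hy => ⟨hSA hy.1, hy.2.trans hγx⟩)
  have hccβ : cc < β := lt_of_le_of_lt hccs hs
  obtain ⟨d, hd⟩ := OT_exists (fun y hy => hAδ (hSA hy.1) : S ∩ Ici γ ⊆ Iio δ)
  have happ : OT S (cc + d) := OT.append hcc hd
  have : cc + d = β := happ.unique hS
  have : cc + d = cc + β := by rw [this, hind cc hccβ]
  have hdβ : d = β := (add_right_inj cc).1 this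
  exact hdβ ▸ hd

/-- proper initial segments of a cofinal set are small -/
theorem OT.initSeg_lt {A : Set Ordinal.{u}} {δ β x : Ordinal.{u}}
    (hAδ : A ⊆ Iio δ) (hsupA : sSup A = δ) (hA : OT A β) (hβ0 : 0 < β) (hx : x < δ) :
    ∃ c < β, OT (A ∩ Iio x) c := by
  have hAne : A.Nonempty := by
    rcases A.eq_empty_or_nonempty with rfl | h
    · rw [csSup_empty] at hsupA
      exact absurd hx (by rw [← hsupA]; exact not_lt_zero (a := x))
    · exact h
  obtain ⟨a, haA, hxa⟩ := exists_lt_of_lt_csSup hAne (hsupA ▸ hx)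
  obtain ⟨s, hs, hOTs⟩ := hA.init haA
  obtain ⟨c, hc⟩ := OT_exists (fun y hy => hAδ hy.1 : A ∩ Iio x ⊆ Iio δ)
  have : c ≤ s := hc.mono hOTs (fun y hy => ⟨hy.1, hy.2.trans hxa⟩)
  exact ⟨c, lt_of_le_of_lt this hs, hc⟩



/-- a strictly increasing cofinal ω-sequence starting at 0, in any nonzero
countable limit ordinal -/
theorem exists_cofinal_seq {δ : Ordinal.{u}} (hδ1 : δ < omega1) (hδl : Order.IsSuccLimit δ) :
    ∃ g : ℕ → Ordinal.{u}, StrictMono g ∧ g 0 = 0 ∧ (∀ k, g k < δ) ∧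
      ∀ x < δ, ∃ k, x < g k := by
  have hcard : δ.card ≤ Cardinal.aleph 0 := by
    have := Cardinal.lt_ord.1 hδ1
    rwa [show (1 : Ordinal) = Order.succ 0 from (Ordinal.succ_zero).symm,
      Cardinal.aleph_succ, Order.lt_succ_iff] at this
  have : #δ.ToType ≤ Cardinal.aleph 0 := by rw [Cardinal.mk_toType]; exact hcard
  have hcount : Countable δ.ToType := Cardinal.mk_le_aleph0_iff.1 (by simpa using this)
  have hne : Nonempty δ.ToType := Ordinal.nonempty_toType_iff.2 hδl.ne_bot
  obtain ⟨f, hf⟩ := exists_surjective_nat δ.ToType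
  set e : ℕ → Ordinal := fun k => ((ToType.mk (o := δ)).symm (f k) : Ordinal) with he
  have heδ : ∀ k, e k < δ := fun k => ((ToType.mk (o := δ)).symm (f k)).2
  have hesurj : ∀ x < δ, ∃ k, e k = x := by
    intro x hx
    obtain ⟨k, hk⟩ := hf (ToType.mk (o := δ) ⟨x, hx⟩)
    exact ⟨k, by rw [he]; simp [hk]⟩
  classical
  let g : ℕ → Ordinal := fun k => Nat.rec 0 (fun k' ih => max ih (e k') + 1) k
  have hg0 : g 0 = 0 := rfl
  have hgsucc : ∀ k, g (k + 1) = max (g k) (e k) + 1 := fun k => rfl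
  have hglt : ∀ k, g k < δ := by
    intro k
    induction k with
    | zero => exact pos_iff_ne_zero.2 hδl.ne_bot
    | succ k ih =>
      rw [hgsucc]
      exact hδl.succ_lt (max_lt ih (heδ k))
  refine ⟨g, strictMono_nat_of_lt_succ (fun k => ?_), hg0, hglt, fun x hx => ?_⟩
  · rw [hgsucc]
    exact lt_of_le_of_lt (le_max_left _ _) (Order.lt_succ _)
  · obtain ⟨k, hk⟩ := hesurj x hx
    refine ⟨k + 1, ?_⟩
    rw [hgsucc, ← hk]
    exact lt_of_le_of_lt (le_max_right _ _) (Order.lt_succ _)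

-- ===== finite sets and indecomposable facts =====

theorem OT_finite_lt_omega0 {S : Set Ordinal.{u}} (h : S.Finite) :
    ∀ c, OT S c → c < ω := by
  refine Set.Finite.induction_on (motive := fun S _ => ∀ c, OT S c → c < ω) S h ?_ ?_
  · intro c hc
    rw [hc.unique OT_empty]
    exact omega0_pos
  · rintro a S haS hS IH c hc
    obtain ⟨ub, hub⟩ := hS.bddAbove
    have hmax : max ub a < max ub a + 1 := by
      rw [Ordinal.add_one_eq_succ]; exact Order.lt_succ _
    have hSsub : S ⊆ Iio (max ub a + 1) :=
      fun y hy => lt_of_le_of_lt (le_trans (hub hy) (le_max_left _ _)) hmax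
    have hasub : ({a} : Set Ordinal) ⊆ Iio (max ub a + 1) := by
      intro y hy
      rw [mem_singleton_iff] at hy
      subst hy
      exact lt_of_le_of_lt (le_max_right _ _) hmax
    obtain ⟨cS, hcS⟩ := OT_exists hSsub
    have hins : insert a S = {a} ∪ S := Set.insert_eq a S
    have h1 : c ≤ (1 : Ordinal) ♯ cS := by
      refine OT_union_le _ hasub hSsub (OT_singleton a) hcS ?_ rfl
      rw [← hins]; exact hc
    have h2 : (1 : Ordinal) ♯ cS = cS + 1 := by rw [nadd_comm, nadd_one]; rfl
    have h3 : cS < ω := IH cS hcS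
    obtain ⟨n, rfl⟩ := Ordinal.lt_omega0.1 h3
    have : c ≤ (n : Ordinal) + 1 := h2 ▸ h1
    exact lt_of_le_of_lt this (by exact_mod_cast nat_lt_omega0 (n+1))

theorem indec_one_or_limit {β : Ordinal.{u}} (hβ : Indecomposable β) :
    β = 1 ∨ Order.IsSuccLimit β := by
  rcases eq_or_lt_of_le (Ordinal.one_le_iff_ne_zero.2 hβ.1.ne') with h1 | h1
  · exact Or.inl h1.symm
  · refine Or.inr (Ordinal.isSuccLimit_iff.2 ⟨hβ.1.ne', Order.isSuccPrelimit_iff_succ_lt.2 fun a ha => ?_⟩)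
    rcases lt_trichotomy (Order.succ a) β with h | h | h
    · exact h
    · exfalso
      have h2 := hβ.2 a ha
      rw [← h, add_succ] at h2
      have h4 : a + a = a := Order.succ_injective h2
      have h5 : a = 0 := by
        have : a + a = a + 0 := by rw [add_zero]; exact h4
        exact (add_right_inj a).1 this
      rw [h5] at h
      exact absurd (h ▸ h1) (by rw [Ordinal.succ_zero]; exact lt_irrefl 1)
    · exact absurd (Order.succ_le_of_lt ha) (not_le.2 h)

-- ===== the per-δ ladder construction =====

theorem key_construction {β : Ordinal.{u}} (hβ0 : 0 < β) (hind : ∀ γ < β, γ + β = β)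
    (hP : Principal (· + ·) β) (hβlim : Order.IsSuccLimit β) (hβω : ω ≤ β)
    (A : ℕ → Ordinal.{u} → Set Ordinal.{u})
    {δ : Ordinal.{u}} (hδ1 : δ < omega1) (hδ0 : δ ≠ 0) (hδd : β ∣ δ)
    (hA : ∀ n, IsClubIn (A n δ) δ ∧ otype (A n δ) = β) :
    ∃ (B : Set Ordinal.{u}) (g : ℕ → Ordinal.{u}),
      IsClubIn B δ ∧ otype B = β ∧ (∀ k, g k < δ) ∧
      ∀ m, A m δ ∩ Ici (g m) ⊆ B := by
  have hδlim : Order.IsSuccLimit δ := by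
    obtain ⟨c, rfl⟩ := hδd
    refine isSuccLimit_mul_left hβlim (pos_iff_ne_zero.2 fun hc => ?_)
    rw [hc, mul_zero] at hδ0
    exact hδ0 rfl
  obtain ⟨g, hgmono, hg0, hglt, hgcof⟩ := exists_cofinal_seq hδ1 hδlim
  have hsub : ∀ n, A n δ ⊆ Iio δ := fun n => (hA n).1.1
  have hsup : ∀ n, sSup (A n δ) = δ := fun n => (hA n).1.2.1
  have hcl : ∀ n, IsClosedIn (A n δ) δ := fun n => (hA n).1.2.2
  have hOT : ∀ n, OT (A n δ) β := by
    intro n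
    obtain ⟨o, ho⟩ := OT_exists (hsub n)
    have : o = β := by rw [← ho.otype_eq]; exact (hA n).2
    exact this ▸ ho
  set B : Set Ordinal := (⋃ m, A m δ ∩ Ici (g m)) ∪ range g with hB
  have hBδ : B ⊆ Iio δ := by
    rintro y (hy | hy)
    · obtain ⟨m, hm⟩ := mem_iUnion.1 hy
      exact hsub m hm.1
    · obtain ⟨k, rfl⟩ := hy
      exact hglt k
  have hBmem : ∀ m, A m δ ∩ Ici (g m) ⊆ B := fun m y hy =>
    Or.inl (mem_iUnion.2 ⟨m, hy⟩)
  have hgB : ∀ k, g k ∈ B := fun k => Or.inr ⟨k, rfl⟩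
  have hBbdd : BddAbove B := bddAbove_of_subset_Iio hBδ
  have hsupB : sSup B = δ := by
    apply le_antisymm
    · exact csSup_le ⟨g 0, hgB 0⟩ (fun b hb => (hBδ hb).le)
    · by_contra h
      push_neg at h
      obtain ⟨k, hk⟩ := hgcof _ h
      exact absurd (le_csSup hBbdd (hgB k)) (not_le.2 hk)
  -- closedness
  have closed_aux : ∀ K : ℕ, ∀ s : Set Ordinal,
      s ⊆ range g ∪ (⋃ m, ⋃ (_ : m < K), A m δ ∩ Ici (g m)) →
      s.Nonempty → sSup s < δ → sSup s ∈ B := by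
    intro K
    induction K with
    | zero =>
      intro s hsub2 hne hlt
      have hs : s ⊆ range g := by
        intro y hy
        rcases hsub2 hy with h | h
        · exact h
        · simp at h
      have hbdds : BddAbove s := bddAbove_of_subset_Iio
        (fun y hy => (le_csSup (bddAbove_of_subset_Iio
          (fun z hz => by obtain ⟨k, rfl⟩ := hs hz; exact hglt k)) hy).trans_lt hlt)
      obtain ⟨K', hK'⟩ := hgcof _ hlt
      have hsfin : s.Finite := by
        refine Set.Finite.subset ((Set.finite_Iio K').image g) ?_
        intro y hy
        obtain ⟨k, rfl⟩ := hs hy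
        have h1 : g k ≤ sSup s := le_csSup hbdds hy
        have h2 : g k < g K' := h1.trans_lt hK'
        exact ⟨k, hgmono.lt_iff_lt.1 h2, rfl⟩
      exact Or.inr (hs (hne.csSup_mem hsfin))
    | succ K IH =>
      intro s hsub2 hne hlt
      have hsIio : s ⊆ Iio δ := by
        intro y hy
        rcases hsub2 hy with h | h
        · obtain ⟨k, rfl⟩ := h; exact hglt k
        · simp only [mem_iUnion] at h
          obtain ⟨m, _, hym⟩ := h
          exact hsub m hym.1
      have hbdds : BddAbove s := bddAbove_of_subset_Iio hsIio
      set s₁ := s ∩ (range g ∪ (⋃ m, ⋃ (_ : m < K), A m δ ∩ Ici (g m))) with hs₁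
      set s₂ := s ∩ (A K δ ∩ Ici (g K)) with hs₂
      have hsplit : s = s₁ ∪ s₂ := by
        apply Subset.antisymm
        · intro y hy
          rcases hsub2 hy with h | h
          · exact Or.inl ⟨hy, Or.inl h⟩
          · simp only [mem_iUnion] at h
            obtain ⟨m, hm, hym⟩ := h
            rcases Nat.lt_succ_iff_lt_or_eq.1 hm with hm' | rfl
            · exact Or.inl ⟨hy, Or.inr (by simp only [mem_iUnion]; exact ⟨m, hm', hym⟩)⟩
            · exact Or.inr ⟨hy, hym⟩
        · rintro y (⟨hy, _⟩ | ⟨hy, _⟩) <;> exact hy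
      have hsup2mem : ∀ t : Set Ordinal, t ⊆ A K δ ∩ Ici (g K) → t.Nonempty →
          sSup t < δ → sSup t ∈ B := by
        intro t ht htne htlt
        have h1 : sSup t ∈ A K δ := hcl K t (fun y hy => (ht hy).1) htne htlt
        have h2 : g K ≤ sSup t := by
          obtain ⟨y, hy⟩ := htne
          have : y ≤ sSup t := le_csSup (bddAbove_of_subset_Iio
            (fun z hz => (le_csSup (bddAbove_of_subset_Iio
              (fun w hw => hsub K (ht hw).1)) hz).trans_lt htlt)) hy
          exact le_trans (ht hy).2 this
        exact hBmem K ⟨h1, h2⟩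
      rcases s₂.eq_empty_or_nonempty with h₂e | h₂ne
      · refine IH s ?_ hne hlt
        intro y hy
        rcases hsub2 hy with h | h
        · exact Or.inl h
        · simp only [mem_iUnion] at h
          obtain ⟨m, hm, hym⟩ := h
          rcases Nat.lt_succ_iff_lt_or_eq.1 hm with hm' | rfl
          · exact Or.inr (by simp only [mem_iUnion]; exact ⟨m, hm', hym⟩)
          · exact absurd (show y ∈ s₂ from ⟨hy, hym⟩) (by rw [h₂e]; exact notMem_empty y)
      rcases s₁.eq_empty_or_nonempty with h₁e | h₁ne
      · have hss : s = s₂ := by rw [hsplit, h₁e, empty_union]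
        rw [hss] at hlt ⊢
        exact hsup2mem s₂ inter_subset_right h₂ne hlt
      · have hbdd₁ : BddAbove s₁ := hbdds.mono inter_subset_left
        have hbdd₂ : BddAbove s₂ := hbdds.mono inter_subset_left
        have heq : sSup s = max (sSup s₁) (sSup s₂) := by
          conv_lhs => rw [hsplit]
          exact csSup_union hbdd₁ h₁ne hbdd₂ h₂ne
        rcases le_total (sSup s₂) (sSup s₁) with hle | hle
        · have h1 : sSup s = sSup s₁ := by rw [heq, max_eq_left hle]
          rw [h1] at hlt ⊢
          exact IH s₁ inter_subset_right h₁ne hlt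
        · have h1 : sSup s = sSup s₂ := by rw [heq, max_eq_right hle]
          rw [h1] at hlt ⊢
          exact hsup2mem s₂ inter_subset_right h₂ne hlt
  have hclosed : IsClosedIn B δ := by
    intro s hsB hne hlt
    obtain ⟨K, hK⟩ := hgcof _ hlt
    refine closed_aux K s ?_ hne hlt
    intro y hy
    rcases hsB hy with h | h
    · obtain ⟨m, hm⟩ := mem_iUnion.1 h
      have hyK : y < g K := (le_csSup (bddAbove_of_subset_Iio
        (fun z hz => hBδ (hsB hz))) hy).trans_lt hK
      have hmK : m < K := hgmono.lt_iff_lt.1 ((hm.2 : g m ≤ y).trans_lt hyK)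
      exact Or.inr (by simp only [mem_iUnion]; exact ⟨m, hmK, hm⟩)
    · exact Or.inl h
  -- order type
  obtain ⟨bo, hbo⟩ := OT_exists hBδ
  have hA0B : A 0 δ ⊆ B := fun y hy => hBmem 0 ⟨hy, by rw [hg0]; exact (zero_le : (0 : Ordinal) ≤ y)⟩
  have hlow : β ≤ bo := (hOT 0).mono hbo hA0B
  have hupp : bo ≤ β := by
    by_contra h
    push_neg at h
    obtain ⟨x, hxB, hseg⟩ := hbo.seg h
    have hxδ : x < δ := hBδ hxB
    obtain ⟨K, hK⟩ := hgcof x hxδ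
    classical
    set C : ℕ → Set Ordinal := fun i =>
      if i = 0 then range g ∩ Iio x else A (i - 1) δ ∩ Iio x with hC
    have hCδ : ∀ i, C i ⊆ Iio δ := by
      intro i y hy
      rcases Nat.eq_zero_or_pos i with rfl | hi
      · rw [hC] at hy; simp only [if_pos rfl] at hy
        exact hy.2.trans hxδ
      · rw [hC] at hy; simp only [if_neg hi.ne'] at hy
        exact hsub _ hy.1
    have hCsmall : ∀ i, ∃ c < β, OT (C i) c := by
      intro i
      rcases Nat.eq_zero_or_pos i with rfl | hi
      · have hC0 : C 0 = range g ∩ Iio x := by rw [hC]; simp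
        have hfin : (C 0).Finite := by
          rw [hC0]
          refine Set.Finite.subset ((Set.finite_Iio K).image g) ?_
          rintro y ⟨⟨k, rfl⟩, hyx⟩
          exact ⟨k, hgmono.lt_iff_lt.1 (lt_trans hyx hK), rfl⟩
        obtain ⟨c, hc⟩ := OT_exists (hCδ 0)
        exact ⟨c, lt_of_lt_of_le (OT_finite_lt_omega0 hfin c hc) hβω, hc⟩
      · have hCi : C i = A (i - 1) δ ∩ Iio x := by rw [hC]; simp [hi.ne']
        obtain ⟨c, hcβ, hc⟩ := OT.initSeg_lt (hsub (i-1)) (hsup (i-1)) (hOT (i-1)) hβ0 hxδ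
        exact ⟨c, hcβ, hCi ▸ hc⟩
    have hcover : B ∩ Iio x ⊆ ⋃ i < K + 1, C i := by
      rintro y ⟨hyB, hyx⟩
      rcases hyB with h | h
      · obtain ⟨m, hm⟩ := mem_iUnion.1 h
        have hmK : m < K := hgmono.lt_iff_lt.1 ((hm.2 : g m ≤ y).trans_lt (hyx.trans hK))
        refine mem_iUnion.2 ⟨m + 1, mem_iUnion.2 ⟨Nat.succ_lt_succ hmK, ?_⟩⟩
        rw [hC]; simp only [Nat.succ_ne_zero, if_neg, Nat.add_sub_cancel]
        exact ⟨hm.1, hyx⟩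
      · refine mem_iUnion.2 ⟨0, mem_iUnion.2 ⟨Nat.succ_pos K, ?_⟩⟩
        rw [hC]; simp only [if_pos rfl]
        exact ⟨h, hyx⟩
    have hUδ : (⋃ i < K + 1, C i) ⊆ Iio δ := by
      intro y hy
      simp only [mem_iUnion, exists_prop] at hy
      obtain ⟨i, _, hy⟩ := hy
      exact hCδ i hy
    obtain ⟨uu, huu⟩ := OT_exists hUδ
    have huuβ : uu < β := OT_finite_union_lt hP hβ0 C hCδ hCsmall (K + 1) uu huu
    have hle : β ≤ uu := hseg.mono huu hcover
    exact absurd (hle.trans_lt huuβ) (lt_irrefl β)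
  have hotB : otype B = β := by
    rw [hbo.otype_eq]
    exact le_antisymm hupp hlow
  exact ⟨B, g, ⟨hBδ, hsupB, hclosed⟩, hotB, hglt, hBmem⟩

-- ===== main theorem =====

theorem one_lt_omega1 : (1 : Ordinal.{u}) < omega1 := by
  rw [omega1, Cardinal.lt_ord]
  simp only [Ordinal.card_one]
  exact lt_of_lt_of_le Cardinal.one_lt_aleph0
    (by rw [← Cardinal.aleph_zero]
        exact (Cardinal.aleph_le_aleph.2 (by norm_num)).trans le_rfl)

theorem no_club_in_one {A : Set Ordinal.{u}} (h : IsClubIn A 1) : False := by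
  obtain ⟨hsub, hsup, _⟩ := h
  rcases A.eq_empty_or_nonempty with rfl | hne
  · rw [csSup_empty] at hsup
    exact absurd hsup.symm one_ne_zero
  · have : sSup A ≤ 0 := csSup_le hne (fun y hy => by
      have := hsub hy
      rw [mem_Iio, Ordinal.lt_one_iff_zero] at this
      exact this.le)
    rw [hsup] at this
    exact absurd this (by norm_num)

/-- For every indecomposable countable ordinal `β`,
`WCG_β` holds iff `WCG^{ℵ₀}_β` holds. -/
theorem wcg_iff_wcg_omega (β : Ordinal) (hβ : Indecomposable β)
    (hβω : β < omega1) : WCG β ↔ WCGomega β := by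
  constructor
  · rintro ⟨A, hlad, hg⟩
    refine ⟨fun _ => A, fun n δ h1 h2 h3 => hlad δ h1 h2 h3, fun D hD => ?_⟩
    obtain ⟨δ, hδD, h0, hdvd, hot⟩ := hg D hD
    exact ⟨δ, hδD, h0, hdvd, 0, hot⟩
  · rintro ⟨A, hsys, hg⟩
    rcases indec_one_or_limit hβ with rfl | hβlim
    · exact absurd (hsys 0 1 one_lt_omega1 one_ne_zero dvd_rfl).1 no_club_in_one
    · have hβ0 : 0 < β := hβ.1
      have hind : ∀ γ < β, γ + β = β := hβ.2
      have hP : Principal (· + ·) β := Ordinal.principal_add_iff_add_left_eq_self.2 hind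
      have hβomega : ω ≤ β := omega0_le_of_isSuccLimit hβlim
      -- choice of the combined ladder
      have key : ∀ δ : Ordinal, ∃ (B : Set Ordinal) (g : ℕ → Ordinal),
          δ < omega1 → δ ≠ 0 → β ∣ δ →
          IsClubIn B δ ∧ otype B = β ∧ (∀ k, g k < δ) ∧
          ∀ m, A m δ ∩ Ici (g m) ⊆ B := by
        intro δ
        by_cases h : δ < omega1 ∧ δ ≠ 0 ∧ β ∣ δ
        · obtain ⟨h1, h2, h3⟩ := h
          obtain ⟨B, g, hB⟩ := key_construction hβ0 hind hP hβlim hβomega A h1 h2 h3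
            (fun n => hsys n δ h1 h2 h3)
          exact ⟨B, g, fun _ _ _ => hB⟩
        · exact ⟨∅, fun _ => 0, fun h1 h2 h3 => absurd ⟨h1, h2, h3⟩ h⟩
      choose B g hBg using key
      refine ⟨B, fun δ h1 h2 h3 => ⟨(hBg δ h1 h2 h3).1, (hBg δ h1 h2 h3).2.1⟩, ?_⟩
      intro D hD
      obtain ⟨δ, hδD, h0, hdvd, n, hot⟩ := hg D hD
      have hδ1 : δ < omega1 := hD.1 hδD
      obtain ⟨hclubB, hotB, hglt, hsubs⟩ := hBg δ hδ1 h0 hdvd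
      refine ⟨δ, hδD, h0, hdvd, ?_⟩
      -- the guessing computation
      have hsubn : A n δ ⊆ Iio δ := (hsys n δ hδ1 h0 hdvd).1.1
      have hsupn : sSup (A n δ) = δ := (hsys n δ hδ1 h0 hdvd).1.2.1
      have hOTn : OT (A n δ) β := by
        obtain ⟨o, ho⟩ := OT_exists hsubn
        have : o = β := by rw [← ho.otype_eq]; exact (hsys n δ hδ1 h0 hdvd).2
        exact this ▸ ho
      set S : Set Ordinal := A n δ ∩ D with hS
      have hSsub : S ⊆ Iio δ := fun y hy => hsubn hy.1
      have hOTS : OT S β := by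
        obtain ⟨o, ho⟩ := OT_exists hSsub
        have : o = β := by rw [← ho.otype_eq]; exact hot
        exact this ▸ ho
      have htail : OT (S ∩ Ici (g δ n)) β :=
        OT.tail hsubn (fun y hy => hy.1) hsupn hOTn hOTS hβ0 hind (hglt n)
      have hOTB : OT (B δ) β := by
        obtain ⟨o, ho⟩ := OT_exists hclubB.1
        have : o = β := by rw [← ho.otype_eq]; exact hotB
        exact this ▸ ho
      have hBD : B δ ∩ D ⊆ Iio δ := fun y hy => hclubB.1 hy.1
      obtain ⟨c, hc⟩ := OT_exists hBD
      have hge : β ≤ c := htail.mono hc (by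
        rintro y ⟨⟨hyA, hyD⟩, hyg⟩
        exact ⟨hsubs n ⟨hyA, hyg⟩, hyD⟩)
      have hle : c ≤ β := hc.mono hOTB (fun y hy => hy.1)
      rw [hc.otype_eq]
      exact le_antisymm hle hge
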